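/- Let n ≥ 3 and let ρ be the rotation matrix of angle 2π/n. Polynomials a, b, c ∈ ℝ[x,y] satisfy the equivariance condition B(ρp) = ρ B(p) ρᵀ for all p ∈ ℝ² (where B(p) = [[c(p), b(p)], [b(p), a(p)]]) if and only if there exist ρ-invariant polynomials p₁, p₂, p₃, p₄, p₅ ∈ ℝ[x,y] such that a = p₁ + (y² − x²)p₂ + 2xy·p₃ − A₁p₄ − A₂p₅, b = 2xy·p₂ + (x² − y²)p₃ + A₁p₅ − A₂p₄, and c = p₁ + (x² − y²)p₂ − 2xy·p₃ + A₁p₄ + A₂p₅, where A₁ = Re((x + iy)^{n−2}) and A₂ = Im((x + iy)^{n−2}). -/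

import Mathlib

open Matrix

/-- The rotation matrix of angle `θ`. -/
noncomputable def rotMat (θ : ℝ) : Matrix (Fin 2) (Fin 2) ℝ :=
  !![Real.cos θ, -Real.sin θ; Real.sin θ, Real.cos θ]

/-- The symmetric-matrix-valued map `B(p) = [[c(p), b(p)], [b(p), a(p)]]` of a quadratic
differential form with polynomial coefficients `a, b, c ∈ ℝ[x,y]`. -/
noncomputable def bdeMatrix (a b c : MvPolynomial (Fin 2) ℝ) (p : Fin 2 → ℝ) :
    Matrix (Fin 2) (Fin 2) ℝ :=
  !![MvPolynomial.eval p c, MvPolynomial.eval p b;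
     MvPolynomial.eval p b, MvPolynomial.eval p a]

/-- `Re((x + iy)^m)` evaluated at `(x, y) = (v 0, v 1)`. -/
noncomputable def rePow (m : ℕ) (v : Fin 2 → ℝ) : ℝ :=
  (((v 0 : ℂ) + Complex.I * (v 1 : ℂ)) ^ m).re

/-- `Im((x + iy)^m)` evaluated at `(x, y) = (v 0, v 1)`. -/
noncomputable def imPow (m : ℕ) (v : Fin 2 → ℝ) : ℝ :=
  (((v 0 : ℂ) + Complex.I * (v 1 : ℂ)) ^ m).im

set_option maxHeartbeats 1000000

open MvPolynomial Complex

noncomputable def reP (p : MvPolynomial (Fin 2) ℂ) : MvPolynomial (Fin 2) ℝ :=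
  ∑ d ∈ p.support, monomial d (p.coeff d).re

noncomputable def imP (p : MvPolynomial (Fin 2) ℂ) : MvPolynomial (Fin 2) ℝ :=
  ∑ d ∈ p.support, monomial d (p.coeff d).im

lemma coeff_reP (p : MvPolynomial (Fin 2) ℂ) (d : Fin 2 →₀ ℕ) :
    (reP p).coeff d = (p.coeff d).re := by
  unfold reP
  rw [MvPolynomial.coeff_sum]
  simp only [coeff_monomial]
  rw [Finset.sum_ite_eq' p.support d (fun d' => (p.coeff d').re)]
  split_ifs with h
  · rfl
  · simp [MvPolynomial.notMem_support_iff.mp h]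

lemma coeff_imP (p : MvPolynomial (Fin 2) ℂ) (d : Fin 2 →₀ ℕ) :
    (imP p).coeff d = (p.coeff d).im := by
  unfold imP
  rw [MvPolynomial.coeff_sum]
  simp only [coeff_monomial]
  rw [Finset.sum_ite_eq' p.support d (fun d' => (p.coeff d').im)]
  split_ifs with h
  · rfl
  · simp [MvPolynomial.notMem_support_iff.mp h]

lemma decompP (p : MvPolynomial (Fin 2) ℂ) :
    map (algebraMap ℝ ℂ) (reP p) + C Complex.I * map (algebraMap ℝ ℂ) (imP p) = p := by
  ext d
  simp [coeff_map, coeff_reP, coeff_imP, coeff_C_mul, Complex.ext_iff]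

lemma eval_map_real (q : MvPolynomial (Fin 2) ℝ) (w : Fin 2 → ℝ) :
    eval (fun i => (w i : ℂ)) (map (algebraMap ℝ ℂ) q) = ((eval w q : ℝ) : ℂ) := by
  rw [MvPolynomial.eval_map]
  have h := MvPolynomial.eval₂_comp_left (algebraMap ℝ ℂ) (RingHom.id ℝ) w q
  simp only [RingHom.comp_id] at h
  rw [show (fun i => ((w i:ℝ) : ℂ)) = ⇑(algebraMap ℝ ℂ) ∘ w from rfl, ← h,
    MvPolynomial.eval₂_id]
  rfl

lemma eval_bind₁' (g : Fin 2 → ℂ) (h : Fin 2 → MvPolynomial (Fin 2) ℂ)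
    (φ : MvPolynomial (Fin 2) ℂ) :
    eval g (bind₁ h φ) = eval (fun i => eval g (h i)) φ := by
  have := MvPolynomial.eval₂Hom_bind₁ (RingHom.id ℂ) g h φ
  exact this

lemma zero_of_eval_real (p : MvPolynomial (Fin 2) ℂ)
    (h : ∀ v : Fin 2 → ℝ, eval (fun i => (v i : ℂ)) p = 0) : p = 0 := by
  have hre : reP p = 0 := by
    apply MvPolynomial.funext
    intro v
    have h1 := h v
    rw [← decompP p] at h1
    simp only [map_add, _root_.map_mul, eval_C, eval_map_real] at h1
    have := congrArg Complex.re h1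
    simpa using this
  have him : imP p = 0 := by
    apply MvPolynomial.funext
    intro v
    have h1 := h v
    rw [← decompP p] at h1
    simp only [map_add, _root_.map_mul, eval_C, eval_map_real] at h1
    have := congrArg Complex.im h1
    simpa using this
  rw [← decompP p, hre, him]
  simp


noncomputable def psiC : MvPolynomial (Fin 2) ℂ →ₐ[ℂ] MvPolynomial (Fin 2) ℂ :=
  bind₁ ![X 0 + C Complex.I * X 1, X 0 - C Complex.I * X 1]

noncomputable def phiC : MvPolynomial (Fin 2) ℂ →ₐ[ℂ] MvPolynomial (Fin 2) ℂ :=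
  bind₁ ![C (1/2 : ℂ) * (X 0 + X 1), C (-Complex.I/2) * (X 0 - X 1)]

lemma phi_psi (p : MvPolynomial (Fin 2) ℂ) : phiC (psiC p) = p := by
  apply MvPolynomial.funext
  intro x
  show eval x (bind₁ _ (bind₁ _ p)) = _
  rw [eval_bind₁', eval_bind₁']
  congr 1
  congr 1
  funext i
  fin_cases i <;> simp <;> ring_nf <;> simp [Complex.I_sq] <;> ring

/-- the "surface point" `(z, z̄)` attached to a real point `v`. -/
noncomputable def sp (v : Fin 2 → ℝ) : Fin 2 → ℂ :=
  ![(v 0 : ℂ) + Complex.I * v 1, (v 0 : ℂ) - Complex.I * v 1]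

lemma eval_sp_psi (p : MvPolynomial (Fin 2) ℂ) (v : Fin 2 → ℝ) :
    eval (fun i => (v i : ℂ)) (psiC p) = eval (sp v) p := by
  show eval _ (bind₁ _ p) = _
  rw [eval_bind₁']
  congr 1
  congr 1
  funext i
  fin_cases i <;> simp [sp]

lemma eval_sp_phi (p : MvPolynomial (Fin 2) ℂ) (w : Fin 2 → ℝ) :
    eval (sp w) (phiC p) = eval (fun i => (w i : ℂ)) p := by
  show eval _ (bind₁ _ p) = _
  rw [eval_bind₁']
  congr 1
  congr 1
  funext i
  fin_cases i <;> simp [sp] <;> ring_nf <;> simp [Complex.I_sq] <;> ring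

lemma surface_zero (p : MvPolynomial (Fin 2) ℂ)
    (h : ∀ v : Fin 2 → ℝ, eval (sp v) p = 0) : p = 0 := by
  have : psiC p = 0 := zero_of_eval_real _ (by intro v; rw [eval_sp_psi]; exact h v)
  rw [← phi_psi p, this, map_zero]

/-- the diagonal substitution `X0 ↦ e X0`, `X1 ↦ e⁻¹ X1`. -/
noncomputable def deltaC (e : ℂ) : MvPolynomial (Fin 2) ℂ →ₐ[ℂ] MvPolynomial (Fin 2) ℂ :=
  bind₁ ![C e * X 0, C e⁻¹ * X 1]

lemma delta_monomial (e : ℂ) (d : Fin 2 →₀ ℕ) (r : ℂ) :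
    deltaC e (monomial d r) = monomial d (r * (e ^ (d 0) * e⁻¹ ^ (d 1))) := by
  show bind₁ _ _ = _
  rw [bind₁_monomial]
  have hsub : ∏ i ∈ d.support, (![C e * X 0, C e⁻¹ * X 1] : Fin 2 → MvPolynomial (Fin 2) ℂ) i ^ d i
      = ∏ i : Fin 2, (![C e * X 0, C e⁻¹ * X 1] : Fin 2 → MvPolynomial (Fin 2) ℂ) i ^ d i :=
    Finset.prod_subset (Finset.subset_univ _)
      (fun i _ hi => by simp [Finsupp.notMem_support_iff.mp hi])
  rw [hsub, Fin.prod_univ_two]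
  rw [monomial_eq, Finsupp.prod]
  have hsub2 : ∏ i ∈ d.support, (X i : MvPolynomial (Fin 2) ℂ) ^ d i
      = ∏ i : Fin 2, (X i : MvPolynomial (Fin 2) ℂ) ^ d i :=
    Finset.prod_subset (Finset.subset_univ _)
      (fun i _ hi => by simp [Finsupp.notMem_support_iff.mp hi])
  rw [hsub2, Fin.prod_univ_two]
  simp only [Matrix.cons_val_zero, Matrix.cons_val_one, Matrix.head_cons, mul_pow, _root_.map_mul,
    C_pow]
  ring

lemma eval_sp_delta (e : ℂ) (p : MvPolynomial (Fin 2) ℂ) (x : Fin 2 → ℂ) :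
    eval x (deltaC e p) = eval ![e * x 0, e⁻¹ * x 1] p := by
  show eval _ (bind₁ _ p) = _
  rw [eval_bind₁']
  congr 1
  congr 1
  funext i
  fin_cases i <;> simp

lemma support_dvd {n : ℕ} (hn : 3 ≤ n) {e : ℂ} (he : IsPrimitiveRoot e n)
    (h : MvPolynomial (Fin 2) ℂ)
    (heig : deltaC e h = C (e ^ 2) * h) (d : Fin 2 →₀ ℕ) (hd : d ∈ h.support) :
    (n : ℤ) ∣ (d 0 : ℤ) - (d 1 : ℤ) - 2 := by
  have h0 : e ≠ 0 := he.ne_zero (by omega)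
  have hco : h.coeff d * (e ^ (d 0) * e⁻¹ ^ (d 1)) = e ^ 2 * h.coeff d := by
    have := congrArg (fun p => MvPolynomial.coeff d p) heig
    rw [coeff_C_mul] at this
    conv_lhs at this => rw [← h.support_sum_monomial_coeff, map_sum]
    simp only [delta_monomial] at this
    rw [MvPolynomial.coeff_sum] at this
    simp only [coeff_monomial] at this
    rw [Finset.sum_ite_eq' h.support d] at this
    rw [if_pos hd] at this
    exact this
  have hc0 : h.coeff d ≠ 0 := MvPolynomial.mem_support_iff.mp hd
  have hpow : e ^ (d 0) = e ^ 2 * e ^ (d 1) := by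
    have h2 := hco
    field_simp at h2
    apply mul_left_cancel₀ hc0
    have h3 : (1/e)^(d 1) * e^(d 1) = 1 := by rw [← mul_pow, one_div, inv_mul_cancel₀ h0, one_pow]
    linear_combination (h.coeff d * e^(d 1)) * h2 - (h.coeff d * e^(d 0)) * h3
  have hz : e ^ ((d 0 : ℤ) - d 1 - 2) = 1 := by
    rw [zpow_sub₀ h0, zpow_sub₀ h0, zpow_natCast, zpow_natCast,
      show ((2:ℤ)) = ((2:ℕ):ℤ) from rfl, zpow_natCast, hpow]
    field_simp
  exact (he.zpow_eq_one_iff_dvd _).mp hz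

noncomputable def qPart (h : MvPolynomial (Fin 2) ℂ) : MvPolynomial (Fin 2) ℂ :=
  ∑ d ∈ h.support, if 2 ≤ d 0 then monomial (d - Finsupp.single 0 2) (h.coeff d) else 0

noncomputable def rPart (n : ℕ) (h : MvPolynomial (Fin 2) ℂ) : MvPolynomial (Fin 2) ℂ :=
  ∑ d ∈ h.support, if 2 ≤ d 0 then 0 else monomial (d - Finsupp.single 1 (n - 2)) (h.coeff d)

lemma r_bound {n : ℕ} (hn : 3 ≤ n) {j l : ℕ} (hj : j < 2)
    (hdvd : (n : ℤ) ∣ (j : ℤ) - l - 2) : (n - 2 : ℕ) ≤ l := by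
  obtain ⟨m, hm⟩ := hdvd
  have hm1 : m ≤ -1 := by nlinarith [hm]
  have : (n : ℤ) - 2 ≤ l := by nlinarith [hm]
  omega

lemma split_eq {n : ℕ} (hn : 3 ≤ n) {e : ℂ} (he : IsPrimitiveRoot e n)
    (h : MvPolynomial (Fin 2) ℂ) (heig : deltaC e h = C (e ^ 2) * h) :
    X 0 ^ 2 * qPart h + X 1 ^ (n - 2) * rPart n h = h := by
  unfold qPart rPart
  rw [Finset.mul_sum, Finset.mul_sum, ← Finset.sum_add_distrib]
  conv_rhs => rw [← h.support_sum_monomial_coeff]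
  apply Finset.sum_congr rfl
  intro d hd
  have hdvd := support_dvd hn he h heig d hd
  split_ifs with h0
  · rw [mul_zero, add_zero, X_pow_eq_monomial, monomial_mul, one_mul,
      add_tsub_cancel_of_le (Finsupp.single_le_iff.mpr h0)]
  · rw [mul_zero, zero_add, X_pow_eq_monomial, monomial_mul, one_mul,
      add_tsub_cancel_of_le (Finsupp.single_le_iff.mpr (r_bound hn (by omega) hdvd))]

lemma epow_one {n : ℕ} (hn : 3 ≤ n) {e : ℂ} (he : IsPrimitiveRoot e n)
    {j l : ℕ} (hdvd : (n : ℤ) ∣ (j : ℤ) - l) : e ^ j * e⁻¹ ^ l = 1 := by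
  have h0 : e ≠ 0 := he.ne_zero (by omega)
  have : e ^ ((j : ℤ) - l) = 1 := (he.zpow_eq_one_iff_dvd _).mpr hdvd
  rw [zpow_sub₀ h0, zpow_natCast, zpow_natCast] at this
  rw [inv_pow]
  field_simp at this ⊢
  linear_combination this

lemma delta_qPart {n : ℕ} (hn : 3 ≤ n) {e : ℂ} (he : IsPrimitiveRoot e n)
    (h : MvPolynomial (Fin 2) ℂ) (heig : deltaC e h = C (e ^ 2) * h) :
    deltaC e (qPart h) = qPart h := by
  unfold qPart
  rw [map_sum]
  apply Finset.sum_congr rfl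
  intro d hd
  have hdvd := support_dvd hn he h heig d hd
  split_ifs with h0
  · rw [delta_monomial]
    have h1 : e ^ (((d - Finsupp.single 0 2 : Fin 2 →₀ ℕ)) 0) * e⁻¹ ^ (((d - Finsupp.single 0 2 : Fin 2 →₀ ℕ)) 1) = 1 := by
      apply epow_one hn he
      simp only [Finsupp.tsub_apply, Finsupp.single_apply]
      norm_num
      rw [show ((d 0 - 2 : ℕ) : ℤ) - ((d 1 : ℕ) : ℤ) = (d 0 : ℤ) - d 1 - 2 by omega]
      exact hdvd
    rw [h1, mul_one]
  · rw [map_zero]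

lemma delta_rPart {n : ℕ} (hn : 3 ≤ n) {e : ℂ} (he : IsPrimitiveRoot e n)
    (h : MvPolynomial (Fin 2) ℂ) (heig : deltaC e h = C (e ^ 2) * h) :
    deltaC e (rPart n h) = rPart n h := by
  unfold rPart
  rw [map_sum]
  apply Finset.sum_congr rfl
  intro d hd
  have hdvd := support_dvd hn he h heig d hd
  split_ifs with h0
  · rw [map_zero]
  · rw [delta_monomial]
    have hb := r_bound hn (by omega : d 0 < 2) hdvd
    have h1 : e ^ (((d - Finsupp.single 1 (n-2) : Fin 2 →₀ ℕ)) 0) * e⁻¹ ^ (((d - Finsupp.single 1 (n-2) : Fin 2 →₀ ℕ)) 1)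
        = 1 := by
      apply epow_one hn he
      simp only [Finsupp.tsub_apply, Finsupp.single_apply]
      norm_num
      rw [show ((d 0 : ℕ) : ℤ) - ((d 1 - (n - 2) : ℕ) : ℤ)
        = ((d 0 : ℤ) - d 1 - 2) + n by omega]
      exact dvd_add hdvd (dvd_refl _)
    rw [h1, mul_one]

lemma rot_mulVec (θ : ℝ) (v : Fin 2 → ℝ) :
    (rotMat θ).mulVec v = ![Real.cos θ * v 0 - Real.sin θ * v 1,
      Real.sin θ * v 0 + Real.cos θ * v 1] := by
  funext i
  fin_cases i <;>
    simp [rotMat, Matrix.mulVec, dotProduct, Fin.sum_univ_two] <;> ring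

lemma helper_mat (co s C B A C' B' A' : ℝ) :
    (!![C', B'; B', A'] = !![co, -s; s, co] * !![C, B; B, A] * !![co, -s; s, co]ᵀ)
    ↔ (C' = co^2 * C - 2*co*s * B + s^2 * A
      ∧ B' = co*s*(C - A) + (co^2 - s^2) * B
      ∧ A' = s^2 * C + 2*co*s * B + co^2 * A) := by
  have ht : (!![co, -s; s, co])ᵀ = !![co, s; -s, co] := by
    funext i j
    fin_cases i <;> fin_cases j <;> simp [Matrix.transpose_apply]
  rw [ht, Matrix.mul_fin_two, Matrix.mul_fin_two]
  rw [← Matrix.ext_iff]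
  constructor
  · intro h
    have h00 := h 0 0
    have h01 := h 0 1
    have h11 := h 1 1
    simp only [Matrix.cons_val', Matrix.cons_val_zero, Matrix.cons_val_one, Matrix.head_cons,
      Matrix.empty_val', Matrix.cons_val_fin_one, Matrix.head_fin_const, Matrix.of_apply] at h00 h01 h11
    exact ⟨by rw [h00]; ring, by rw [h01]; ring, by rw [h11]; ring⟩
  · rintro ⟨h1, h2, h3⟩ i j
    fin_cases i <;> fin_cases j <;>
      simp only [Matrix.cons_val', Matrix.cons_val_zero, Matrix.cons_val_one, Matrix.head_cons,
        Matrix.empty_val', Matrix.cons_val_fin_one, Matrix.head_fin_const, Matrix.of_apply,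
        h1, h2, h3] <;> ring

lemma entries_iff (θ : ℝ) (a b c : MvPolynomial (Fin 2) ℝ) (v : Fin 2 → ℝ) :
    (bdeMatrix a b c ((rotMat θ).mulVec v)
      = rotMat θ * bdeMatrix a b c v * (rotMat θ)ᵀ)
    ↔ (eval ((rotMat θ).mulVec v) c
        = Real.cos θ^2 * eval v c - 2*Real.cos θ*Real.sin θ * eval v b
          + Real.sin θ^2 * eval v a
      ∧ eval ((rotMat θ).mulVec v) b
        = Real.cos θ*Real.sin θ*(eval v c - eval v a)
          + (Real.cos θ^2 - Real.sin θ^2) * eval v b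
      ∧ eval ((rotMat θ).mulVec v) a
        = Real.sin θ^2 * eval v c + 2*Real.cos θ*Real.sin θ * eval v b
          + Real.cos θ^2 * eval v a) := by
  unfold bdeMatrix rotMat
  exact helper_mat _ _ _ _ _ _ _ _

lemma sp_zero (v : Fin 2 → ℝ) : sp v 0 = (v 0 : ℂ) + Complex.I * v 1 := rfl

lemma sp_one (v : Fin 2 → ℝ) : sp v 1 = (v 0 : ℂ) - Complex.I * v 1 := rfl

lemma sp_one_conj (v : Fin 2 → ℝ) : sp v 1 = (starRingEnd ℂ) (sp v 0) := by
  simp [sp_zero, sp_one, Complex.ext_iff]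

lemma re_im_combo (v : Fin 2 → ℝ) (m : ℕ) (P2 P3 P4 P5 : ℝ) :
    ((sp v 0)^2 * ((P2 : ℂ) + Complex.I * P3) + (sp v 1)^m * ((P4 : ℂ) + Complex.I * P5)).re
      = (v 0^2 - v 1^2)*P2 - 2*v 0*v 1*P3 + rePow m v * P4 + imPow m v * P5
    ∧ ((sp v 0)^2 * ((P2 : ℂ) + Complex.I * P3) + (sp v 1)^m * ((P4 : ℂ) + Complex.I * P5)).im
      = 2*v 0*v 1*P2 + (v 0^2 - v 1^2)*P3 + rePow m v * P5 - imPow m v * P4 := by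
  rw [sp_one_conj, ← map_pow]
  have hsp : (sp v 0) ^ m = ((v 0 : ℂ) + Complex.I * (v 1 : ℂ)) ^ m := by rw [sp_zero]
  have hre : ((starRingEnd ℂ) ((sp v 0)^m)).re = rePow m v := by
    rw [Complex.conj_re, hsp]; rfl
  have him : ((starRingEnd ℂ) ((sp v 0)^m)).im = - imPow m v := by
    rw [Complex.conj_im, hsp]; rfl
  have h2re : ((sp v 0)^2).re = v 0^2 - v 1^2 := by
    simp [sp_zero, pow_two, Complex.mul_re, Complex.mul_im]; try ring
  have h2im : ((sp v 0)^2).im = 2 * v 0 * v 1 := by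
    simp [sp_zero, pow_two, Complex.mul_re, Complex.mul_im]; try ring
  constructor <;>
    simp only [Complex.add_re, Complex.add_im, Complex.mul_re, Complex.mul_im, hre, him,
      h2re, h2im, Complex.ofReal_re, Complex.ofReal_im, Complex.I_re, Complex.I_im,
      Complex.add_re, Complex.add_im, Complex.mul_re, Complex.mul_im] <;> ring

section main

variable {n : ℕ}

lemma e_eq (n : ℕ) (hn : 3 ≤ n) :
    Complex.exp (2*Real.pi*Complex.I/n)
      = (Real.cos (2*Real.pi/n) : ℂ) + (Real.sin (2*Real.pi/n) : ℂ) * Complex.I := by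
  have : (2*Real.pi*Complex.I/n : ℂ) = ((2*Real.pi/n : ℝ) : ℂ) * Complex.I := by
    push_cast
    have : (n : ℂ) ≠ 0 := by
      simp only [ne_eq, Nat.cast_eq_zero]
      omega
    field_simp
    try ring
  rw [this, Complex.exp_mul_I, ← Complex.ofReal_cos, ← Complex.ofReal_sin]

lemma e_inv (n : ℕ) (hn : 3 ≤ n) :
    (Complex.exp (2*Real.pi*Complex.I/n))⁻¹
      = (Real.cos (2*Real.pi/n) : ℂ) - (Real.sin (2*Real.pi/n) : ℂ) * Complex.I := by
  rw [← Complex.exp_neg]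
  have : (-(2*Real.pi*Complex.I/n) : ℂ) = ((-(2*Real.pi/n) : ℝ) : ℂ) * Complex.I := by
    push_cast
    have : (n : ℂ) ≠ 0 := by
      simp only [ne_eq, Nat.cast_eq_zero]
      omega
    field_simp
    try ring
  rw [this, Complex.exp_mul_I, ← Complex.ofReal_cos, ← Complex.ofReal_sin]
  push_cast
  simp [Real.cos_neg, Real.sin_neg]
  ring

lemma sp_rot (n : ℕ) (hn : 3 ≤ n) (v : Fin 2 → ℝ) :
    sp ((rotMat (2*Real.pi/n)).mulVec v)
      = ![Complex.exp (2*Real.pi*Complex.I/n) * sp v 0,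
          (Complex.exp (2*Real.pi*Complex.I/n))⁻¹ * sp v 1] := by
  rw [rot_mulVec, e_inv n hn, e_eq n hn]
  funext i
  fin_cases i <;> simp [sp] <;>
  · push_cast
    ring_nf
    simp [Complex.I_sq]
    try ring

lemma e_pow_n (n : ℕ) (hn : 3 ≤ n) : Complex.exp (2*Real.pi*Complex.I/n) ^ n = 1 :=
  (Complex.isPrimitiveRoot_exp n (by omega)).pow_eq_one

lemma e_inv_pow (n : ℕ) (hn : 3 ≤ n) :
    (Complex.exp (2*Real.pi*Complex.I/n))⁻¹ ^ (n - 2)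
      = Complex.exp (2*Real.pi*Complex.I/n) ^ 2 := by
  set e := Complex.exp (2*Real.pi*Complex.I/n) with hedef
  have h0 : e ≠ 0 := Complex.exp_ne_zero _
  have hn1 : e ^ (n - 2) * e ^ 2 = 1 := by
    rw [← pow_add]
    rw [show n - 2 + 2 = n by omega]
    exact e_pow_n n hn
  rw [inv_pow]
  exact inv_eq_of_mul_eq_one_right hn1


/-- general form of `Z_n`-equivariant quadratic differential forms, `n ≥ 3`:
with `ρ` the rotation of angle `2π/n`, the coefficients `a, b, c` satisfy
`B(ρp) = ρ B(p) ρᵀ` iff they have the stated general form, with `A₁ = Re((x+iy)^{n−2})`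
and `A₂ = Im((x+iy)^{n−2})` and `ρ`-invariant polynomial coefficients `p₁, …, p₅`. -/
theorem zn_equivariant_quadratic_forms (n : ℕ) (hn : 3 ≤ n)
    (a b c : MvPolynomial (Fin 2) ℝ) :
    (∀ p : Fin 2 → ℝ,
      bdeMatrix a b c ((rotMat (2 * Real.pi / n)).mulVec p)
        = rotMat (2 * Real.pi / n) * bdeMatrix a b c p * (rotMat (2 * Real.pi / n))ᵀ)
    ↔ ∃ p₁ p₂ p₃ p₄ p₅ : MvPolynomial (Fin 2) ℝ,
        (∀ v : Fin 2 → ℝ, MvPolynomial.eval ((rotMat (2 * Real.pi / n)).mulVec v) p₁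
          = MvPolynomial.eval v p₁) ∧
        (∀ v : Fin 2 → ℝ, MvPolynomial.eval ((rotMat (2 * Real.pi / n)).mulVec v) p₂
          = MvPolynomial.eval v p₂) ∧
        (∀ v : Fin 2 → ℝ, MvPolynomial.eval ((rotMat (2 * Real.pi / n)).mulVec v) p₃
          = MvPolynomial.eval v p₃) ∧
        (∀ v : Fin 2 → ℝ, MvPolynomial.eval ((rotMat (2 * Real.pi / n)).mulVec v) p₄
          = MvPolynomial.eval v p₄) ∧
        (∀ v : Fin 2 → ℝ, MvPolynomial.eval ((rotMat (2 * Real.pi / n)).mulVec v) p₅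
          = MvPolynomial.eval v p₅) ∧
        (∀ v : Fin 2 → ℝ, MvPolynomial.eval v a
          = MvPolynomial.eval v p₁ + (v 1 ^ 2 - v 0 ^ 2) * MvPolynomial.eval v p₂
            + 2 * v 0 * v 1 * MvPolynomial.eval v p₃
            - rePow (n - 2) v * MvPolynomial.eval v p₄
            - imPow (n - 2) v * MvPolynomial.eval v p₅) ∧
        (∀ v : Fin 2 → ℝ, MvPolynomial.eval v b
          = 2 * v 0 * v 1 * MvPolynomial.eval v p₂
            + (v 0 ^ 2 - v 1 ^ 2) * MvPolynomial.eval v p₃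
            + rePow (n - 2) v * MvPolynomial.eval v p₅
            - imPow (n - 2) v * MvPolynomial.eval v p₄) ∧
        (∀ v : Fin 2 → ℝ, MvPolynomial.eval v c
          = MvPolynomial.eval v p₁ + (v 0 ^ 2 - v 1 ^ 2) * MvPolynomial.eval v p₂
            - 2 * v 0 * v 1 * MvPolynomial.eval v p₃
            + rePow (n - 2) v * MvPolynomial.eval v p₄
            + imPow (n - 2) v * MvPolynomial.eval v p₅) := by
  have hn0 : n ≠ 0 := by omega
  set θ : ℝ := 2 * Real.pi / n with hθ
  set co : ℝ := Real.cos θ with hco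
  set s : ℝ := Real.sin θ with hs
  set e : ℂ := Complex.exp (2 * Real.pi * Complex.I / n) with hedef
  have hprim : IsPrimitiveRoot e n := Complex.isPrimitiveRoot_exp n hn0
  have hpy : s ^ 2 + co ^ 2 = 1 := Real.sin_sq_add_cos_sq θ
  have hee : e = (co : ℂ) + (s : ℂ) * Complex.I := by
    rw [hedef, hco, hs, hθ]
    exact e_eq n hn
  have he2re : (e ^ 2).re = co ^ 2 - s ^ 2 := by
    rw [hee]
    simp only [pow_two, Complex.mul_re, Complex.mul_im, Complex.add_re, Complex.add_im,
      Complex.ofReal_re, Complex.ofReal_im, Complex.I_re, Complex.I_im]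
    ring
  have he2im : (e ^ 2).im = 2 * co * s := by
    rw [hee]
    simp only [pow_two, Complex.mul_re, Complex.mul_im, Complex.add_re, Complex.add_im,
      Complex.ofReal_re, Complex.ofReal_im, Complex.I_re, Complex.I_im]
    ring
  set G : (Fin 2 → ℝ) → ℂ := fun w =>
    (((eval w c - eval w a) / 2 : ℝ) : ℂ) + Complex.I * ((eval w b : ℝ) : ℂ) with hGdef
  have hGre : ∀ w, (G w).re = (eval w c - eval w a) / 2 := by
    intro w; simp [hGdef]
  have hGim : ∀ w, (G w).im = eval w b := by
    intro w; simp [hGdef]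
  constructor
  · -- forward direction
    intro hE
    have htriple := fun v => (entries_iff θ a b c v).mp (hE v)
    have htr : ∀ v, eval ((rotMat θ).mulVec v) a + eval ((rotMat θ).mulVec v) c
        = eval v a + eval v c := by
      intro v
      obtain ⟨t1, t2, t3⟩ := htriple v
      rw [← hco, ← hs] at t1 t3
      linear_combination t1 + t3 + (eval v a + eval v c) * hpy
    have hG : ∀ v, G ((rotMat θ).mulVec v) = e ^ 2 * G v := by
      intro v
      obtain ⟨t1, t2, t3⟩ := htriple v
      rw [← hco, ← hs] at t1 t2 t3
      apply Complex.ext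
      · rw [hGre, Complex.mul_re, hGre, hGim, he2re, he2im]
        linear_combination (1/2 : ℝ) * t1 - (1/2 : ℝ) * t3
      · rw [hGim, Complex.mul_im, hGre, hGim, he2re, he2im]
        linear_combination t2
    set g : MvPolynomial (Fin 2) ℂ :=
      C ((1:ℂ)/2) * (map (algebraMap ℝ ℂ) c - map (algebraMap ℝ ℂ) a)
        + C Complex.I * map (algebraMap ℝ ℂ) b with hgdef
    have hgeval : ∀ v : Fin 2 → ℝ, eval (fun i => (v i : ℂ)) g = G v := by
      intro v
      rw [hgdef]
      simp only [map_add, _root_.map_mul, map_sub, eval_C, eval_map_real]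
      rw [hGdef]
      push_cast
      ring
    set h : MvPolynomial (Fin 2) ℂ := phiC g with hhdef
    have hh : ∀ v : Fin 2 → ℝ, eval (sp v) h = G v := by
      intro v
      rw [hhdef, eval_sp_phi, hgeval]
    have heig : deltaC e h = C (e ^ 2) * h := by
      rw [← sub_eq_zero]
      apply surface_zero
      intro v
      rw [map_sub, _root_.map_mul, eval_C, eval_sp_delta]
      rw [show ![e * sp v 0, e⁻¹ * sp v 1] = sp ((rotMat θ).mulVec v) by
        rw [hθ, sp_rot n hn v, hedef]]
      rw [hh, hh, hG]
      ring
    have hev : ∀ (p : MvPolynomial (Fin 2) ℂ) (v : Fin 2 → ℝ),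
        eval (sp v) p = ((eval v (reP (psiC p)) : ℝ) : ℂ)
          + Complex.I * ((eval v (imP (psiC p)) : ℝ) : ℂ) := by
      intro p v
      rw [← eval_sp_psi]
      conv_lhs => rw [← decompP (psiC p)]
      simp only [map_add, _root_.map_mul, eval_C, eval_map_real]
    have hQinv : ∀ v, eval (sp ((rotMat θ).mulVec v)) (qPart h) = eval (sp v) (qPart h) := by
      intro v
      rw [hθ, sp_rot n hn v, ← hedef, ← eval_sp_delta, delta_qPart hn hprim h heig]
    have hRinv : ∀ v, eval (sp ((rotMat θ).mulVec v)) (rPart n h)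
        = eval (sp v) (rPart n h) := by
      intro v
      rw [hθ, sp_rot n hn v, ← hedef, ← eval_sp_delta, delta_rPart hn hprim h heig]
    have hsplitv : ∀ v, G v = (sp v 0)^2 * eval (sp v) (qPart h)
        + (sp v 1)^(n-2) * eval (sp v) (rPart n h) := by
      intro v
      rw [← hh v]
      conv_lhs => rw [← split_eq hn hprim h heig]
      simp only [map_add, _root_.map_mul, map_pow, eval_X]
    have hcombo : ∀ v : Fin 2 → ℝ,
        (eval v c - eval v a) / 2
          = (v 0^2 - v 1^2) * eval v (reP (psiC (qPart h)))
            - 2*v 0*v 1 * eval v (imP (psiC (qPart h)))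
            + rePow (n-2) v * eval v (reP (psiC (rPart n h)))
            + imPow (n-2) v * eval v (imP (psiC (rPart n h)))
        ∧ eval v b
          = 2*v 0*v 1 * eval v (reP (psiC (qPart h)))
            + (v 0^2 - v 1^2) * eval v (imP (psiC (qPart h)))
            + rePow (n-2) v * eval v (imP (psiC (rPart n h)))
            - imPow (n-2) v * eval v (reP (psiC (rPart n h))) := by
      intro v
      have h1 := hsplitv v
      rw [hev (qPart h) v, hev (rPart n h) v] at h1
      have h2 := congrArg Complex.re h1
      have h3 := congrArg Complex.im h1
      rw [hGre] at h2
      rw [hGim] at h3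
      obtain ⟨hA, hB⟩ := re_im_combo v (n-2) (eval v (reP (psiC (qPart h))))
        (eval v (imP (psiC (qPart h)))) (eval v (reP (psiC (rPart n h))))
        (eval v (imP (psiC (rPart n h))))
      exact ⟨h2.trans hA, h3.trans hB⟩
    refine ⟨C (2⁻¹ : ℝ) * (a + c), reP (psiC (qPart h)), imP (psiC (qPart h)),
      reP (psiC (rPart n h)), imP (psiC (rPart n h)), ?_, ?_, ?_, ?_, ?_, ?_, ?_, ?_⟩
    · intro v
      simp only [_root_.map_mul, eval_C, map_add]
      linarith [htr v]
    · intro v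
      have hq := hQinv v
      rw [hev (qPart h) _, hev (qPart h) _] at hq
      simp only [Complex.ext_iff, Complex.add_re, Complex.add_im, Complex.mul_re,
        Complex.mul_im, Complex.ofReal_re, Complex.ofReal_im, Complex.I_re, Complex.I_im] at hq
      simpa using hq.1
    · intro v
      have hq := hQinv v
      rw [hev (qPart h) _, hev (qPart h) _] at hq
      simp only [Complex.ext_iff, Complex.add_re, Complex.add_im, Complex.mul_re,
        Complex.mul_im, Complex.ofReal_re, Complex.ofReal_im, Complex.I_re, Complex.I_im] at hq
      simpa using hq.2
    · intro v
      have hq := hRinv v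
      rw [hev (rPart n h) _, hev (rPart n h) _] at hq
      simp only [Complex.ext_iff, Complex.add_re, Complex.add_im, Complex.mul_re,
        Complex.mul_im, Complex.ofReal_re, Complex.ofReal_im, Complex.I_re, Complex.I_im] at hq
      simpa using hq.1
    · intro v
      have hq := hRinv v
      rw [hev (rPart n h) _, hev (rPart n h) _] at hq
      simp only [Complex.ext_iff, Complex.add_re, Complex.add_im, Complex.mul_re,
        Complex.mul_im, Complex.ofReal_re, Complex.ofReal_im, Complex.I_re, Complex.I_im] at hq
      simpa using hq.2
    · intro v
      obtain ⟨h2, h3⟩ := hcombo v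
      simp only [_root_.map_mul, eval_C, map_add]
      linear_combination -h2
    · intro v
      exact (hcombo v).2
    · intro v
      obtain ⟨h2, h3⟩ := hcombo v
      simp only [_root_.map_mul, eval_C, map_add]
      linear_combination h2
  · -- backward direction
    rintro ⟨p₁, p₂, p₃, p₄, p₅, h1, h2, h3, h4, h5, ha, hb, hc⟩
    intro v
    rw [entries_iff θ a b c v]
    rw [← hco, ← hs]
    have hGs : ∀ w : Fin 2 → ℝ, G w
        = (sp w 0)^2 * ((eval w p₂ : ℝ) + Complex.I * (eval w p₃ : ℝ))
          + (sp w 1)^(n-2) * ((eval w p₄ : ℝ) + Complex.I * (eval w p₅ : ℝ)) := by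
      intro w
      obtain ⟨hA, hB⟩ := re_im_combo w (n-2) (eval w p₂) (eval w p₃) (eval w p₄) (eval w p₅)
      apply Complex.ext
      · rw [hGre, hA, ha w, hc w]
        ring
      · rw [hGim, hB, hb w]
    have htr : eval ((rotMat θ).mulVec v) a + eval ((rotMat θ).mulVec v) c
        = eval v a + eval v c := by
      rw [ha v, hc v, ha ((rotMat θ).mulVec v), hc ((rotMat θ).mulVec v),
        h1 v, h2 v, h3 v, h4 v, h5 v]
      ring
    have hG : G ((rotMat θ).mulVec v) = e ^ 2 * G v := by
      have e0 : sp ((rotMat θ).mulVec v) 0 = e * sp v 0 := by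
        rw [hθ, sp_rot n hn v, ← hedef]
        simp
      have e1 : sp ((rotMat θ).mulVec v) 1 = e⁻¹ * sp v 1 := by
        rw [hθ, sp_rot n hn v, ← hedef]
        simp
      have hei : e⁻¹ ^ (n - 2) = e ^ 2 := by
        rw [hedef]
        exact e_inv_pow n hn
      rw [hGs ((rotMat θ).mulVec v), hGs v, e0, e1, h2 v, h3 v, h4 v, h5 v,
        mul_pow, mul_pow, hei]
      ring
    have hre := congrArg Complex.re hG
    have him := congrArg Complex.im hG
    rw [hGre, Complex.mul_re, hGre, hGim, he2re, he2im] at hre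
    rw [hGim, Complex.mul_im, hGre, hGim, he2re, he2im] at him
    refine ⟨?_, ?_, ?_⟩
    · linear_combination (1/2 : ℝ) * htr + hre
        - ((eval v a + eval v c)/2) * hpy
    · linear_combination him
    · linear_combination (1/2 : ℝ) * htr - hre
        - ((eval v a + eval v c)/2) * hpy
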